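/- Let u, v: {1,2,…} → ℂ be any sequences and for l ≥ 1 define ‖u‖_l² = Σ_{n=1}^{[l]} |u(n)|² + (l − [l]) |u([l]+1)|². Suppose for every n, the vectors (u(n+1), u(n)) and (v(n+1), v(n)) are the images of two orthonormal vectors in ℝ² under a common matrix A_n ∈ SL(2,ℝ). Then ‖u‖_l · ‖v‖_l ≥ ([l] − 1)/2. -/

import Mathlib

/-- Auxiliary: Cauchy–Schwarz-type bound for shifted/unshifted sums. -/
lemma aux_cs (f g : ℕ → ℝ) (m : ℕ) (hm : 1 ≤ m)
    (hf : ∀ n, 0 ≤ f n) (hg : ∀ n, 0 ≤ g n) :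
    ∑ n ∈ Finset.Icc 1 (m-1), f (n+1) * g n ≤
      Real.sqrt (∑ n ∈ Finset.Icc 1 m, f n ^ 2) *
      Real.sqrt (∑ n ∈ Finset.Icc 1 m, g n ^ 2) := by
  have h1 : (∑ n ∈ Finset.Icc 1 (m-1), f (n+1) * g n) ^ 2 ≤
      (∑ n ∈ Finset.Icc 1 (m-1), f (n+1) ^ 2) *
      (∑ n ∈ Finset.Icc 1 (m-1), g n ^ 2) :=
    Finset.sum_mul_sq_le_sq_mul_sq _ _ _
  have hshift : ∑ n ∈ Finset.Icc 1 (m-1), f (n+1) ^ 2 = ∑ n ∈ Finset.Icc 2 m, f n ^ 2 := by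
    rw [show Finset.Icc 2 m = Finset.Icc (1+1) (m-1+1) by rw [Nat.sub_add_cancel hm],
      ← Finset.map_add_right_Icc 1 (m-1) 1, Finset.sum_map]
    simp
  have h2 : ∑ n ∈ Finset.Icc 1 (m-1), f (n+1) ^ 2 ≤ ∑ n ∈ Finset.Icc 1 m, f n ^ 2 := by
    rw [hshift]
    exact Finset.sum_le_sum_of_subset_of_nonneg
      (Finset.Icc_subset_Icc (by norm_num) le_rfl) (fun i _ _ => sq_nonneg _)
  have h3 : ∑ n ∈ Finset.Icc 1 (m-1), g n ^ 2 ≤ ∑ n ∈ Finset.Icc 1 m, g n ^ 2 :=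
    Finset.sum_le_sum_of_subset_of_nonneg
      (Finset.Icc_subset_Icc le_rfl (Nat.sub_le m 1)) (fun i _ _ => sq_nonneg _)
  have hsum_nonneg : 0 ≤ ∑ n ∈ Finset.Icc 1 (m-1), f (n+1) * g n :=
    Finset.sum_nonneg fun i _ => mul_nonneg (hf _) (hg _)
  have := Real.sqrt_le_sqrt (h1.trans (mul_le_mul h2 h3
    (Finset.sum_nonneg fun i _ => sq_nonneg _)
    (Finset.sum_nonneg fun i _ => sq_nonneg _)))
  rwa [Real.sqrt_sq hsum_nonneg, Real.sqrt_mul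
    (Finset.sum_nonneg fun i _ => sq_nonneg _)] at this

/-- If `u, v` are solutions of the same second-order difference equation with orthonormal
initial data (i.e. `(u(n+1), u(n))ᵀ = Aₙ X`, `(v(n+1), v(n))ᵀ = Aₙ Y` with `Aₙ ∈ SL(2,ℝ)`
and `X, Y` orthonormal), then `‖u‖_l · ‖v‖_l ≥ ([l] − 1)/2`, where
`‖u‖_l² = Σ_{n=1}^{[l]} |u(n)|² + (l − [l]) |u([l]+1)|²`. -/
theorem stmt_9 (u v : ℕ → ℝ) (A : ℕ → Matrix (Fin 2) (Fin 2) ℝ)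
    (X Y : Fin 2 → ℝ)
    (hX : X 0 ^ 2 + X 1 ^ 2 = 1) (hY : Y 0 ^ 2 + Y 1 ^ 2 = 1)
    (hXY : X 0 * Y 0 + X 1 * Y 1 = 0)
    (hdet : ∀ n, (A n).det = 1)
    (hu : ∀ n, (A n).mulVec X = ![u (n + 1), u n])
    (hv : ∀ n, (A n).mulVec Y = ![v (n + 1), v n])
    (l : ℝ) (hl : 1 ≤ l) :
    ((⌊l⌋₊ : ℝ) - 1) / 2 ≤
      Real.sqrt ((∑ n ∈ Finset.Icc 1 ⌊l⌋₊, |u n| ^ 2) +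
          (l - ⌊l⌋₊) * |u (⌊l⌋₊ + 1)| ^ 2) *
      Real.sqrt ((∑ n ∈ Finset.Icc 1 ⌊l⌋₊, |v n| ^ 2) +
          (l - ⌊l⌋₊) * |v (⌊l⌋₊ + 1)| ^ 2) := by
  set m := ⌊l⌋₊ with hmdef
  have hm1 : 1 ≤ m := Nat.le_floor (by exact_mod_cast hl)
  -- key Wronskian identity
  have key : ∀ n, 1 ≤ |u (n+1)| * |v n| + |u n| * |v (n+1)| := by
    intro n
    have hu1 := congrFun (hu n) 0
    have hu0 := congrFun (hu n) 1
    have hv1 := congrFun (hv n) 0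
    have hv0 := congrFun (hv n) 1
    simp [Matrix.mulVec, dotProduct, Fin.sum_univ_two] at hu1 hu0 hv1 hv0
    have hd := hdet n
    rw [Matrix.det_fin_two] at hd
    have hsq : (u (n+1) * v n - u n * v (n+1))^2 = 1 := by
      rw [← hu1, ← hu0, ← hv1, ← hv0]
      linear_combination ((A n 0 0 * A n 1 1 - A n 0 1 * A n 1 0) + 1) *
        (X 0 * Y 1 - X 1 * Y 0)^2 * hd + (Y 0^2 + Y 1^2) * hX + hY -
        (X 0 * Y 0 + X 1 * Y 1) * hXY
    have habs : |u (n+1) * v n - u n * v (n+1)| = 1 := by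
      have h := sq_abs (u (n+1) * v n - u n * v (n+1))
      nlinarith [abs_nonneg (u (n+1) * v n - u n * v (n+1))]
    calc (1:ℝ) = |u (n+1) * v n - u n * v (n+1)| := habs.symm
      _ ≤ |u (n+1) * v n| + |u n * v (n+1)| := abs_sub _ _
      _ = |u (n+1)| * |v n| + |u n| * |v (n+1)| := by rw [abs_mul, abs_mul]
  set Su := ∑ n ∈ Finset.Icc 1 m, |u n| ^ 2 with hSu
  set Sv := ∑ n ∈ Finset.Icc 1 m, |v n| ^ 2 with hSv
  have hcs1 := aux_cs (fun n => |u n|) (fun n => |v n|) m hm1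
    (fun n => abs_nonneg _) (fun n => abs_nonneg _)
  have hcs2 := aux_cs (fun n => |v n|) (fun n => |u n|) m hm1
    (fun n => abs_nonneg _) (fun n => abs_nonneg _)
  have hmain : (m : ℝ) - 1 ≤ 2 * (Real.sqrt Su * Real.sqrt Sv) := by
    have hcard : ((m : ℝ) - 1) = ∑ _n ∈ Finset.Icc 1 (m-1), (1:ℝ) := by
      simp [Nat.cast_sub hm1]
    calc (m : ℝ) - 1 = ∑ _n ∈ Finset.Icc 1 (m-1), (1:ℝ) := hcard
      _ ≤ ∑ n ∈ Finset.Icc 1 (m-1),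
          (|u (n+1)| * |v n| + |u n| * |v (n+1)|) :=
        Finset.sum_le_sum fun n _ => key n
      _ = (∑ n ∈ Finset.Icc 1 (m-1), |u (n+1)| * |v n|) +
          (∑ n ∈ Finset.Icc 1 (m-1), |v (n+1)| * |u n|) := by
        rw [← Finset.sum_add_distrib]; congr 1; ext n; ring
      _ ≤ Real.sqrt Su * Real.sqrt Sv + Real.sqrt Sv * Real.sqrt Su := add_le_add hcs1 hcs2
      _ = 2 * (Real.sqrt Su * Real.sqrt Sv) := by ring
  have hextra_u : (0:ℝ) ≤ (l - m) * |u (m + 1)| ^ 2 :=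
    mul_nonneg (by simp [hmdef]; exact Nat.floor_le (by linarith)) (sq_nonneg _)
  have hextra_v : (0:ℝ) ≤ (l - m) * |v (m + 1)| ^ 2 :=
    mul_nonneg (by simp [hmdef]; exact Nat.floor_le (by linarith)) (sq_nonneg _)
  have hSu_nonneg : 0 ≤ Su := Finset.sum_nonneg fun i _ => sq_nonneg _
  have hSv_nonneg : 0 ≤ Sv := Finset.sum_nonneg fun i _ => sq_nonneg _
  have h1 : Real.sqrt Su ≤ Real.sqrt (Su + (l - m) * |u (m + 1)| ^ 2) :=
    Real.sqrt_le_sqrt (by linarith)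
  have h2 : Real.sqrt Sv ≤ Real.sqrt (Sv + (l - m) * |v (m + 1)| ^ 2) :=
    Real.sqrt_le_sqrt (by linarith)
  have := mul_le_mul h1 h2 (Real.sqrt_nonneg _) (Real.sqrt_nonneg _)
  linarith
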